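/- For every n ≥ 1 and every k with 1 ≤ k ≤ n, the number N of permutations π ∈ S_n that avoid the generalized pattern 2-13 and satisfy π_n = k is the ballot number (k/n)·C(2n-k-1, n-1); equivalently, n · N = k · C(2n-k-1, n-1). -/

import Mathlib

open Equiv Fin

/-- `π` avoids the generalized pattern 2-13. -/
def Avoids2d13 {n : ℕ} (π : Equiv.Perm (Fin n)) : Prop :=
  ¬ ∃ (i j : Fin n) (h : j.1 + 1 < n), i < j ∧ π j < π i ∧ π i < π ⟨j.1 + 1, h⟩

namespace BallotAux

variable {n : ℕ}

def ins (k : Fin (n+1)) (σ : Equiv.Perm (Fin n)) : Equiv.Perm (Fin (n+1)) :=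
  finSuccEquivLast.trans ((σ.optionCongr).trans (finSuccEquiv' k).symm)

lemma ins_castSucc (k : Fin (n+1)) (σ : Equiv.Perm (Fin n)) (i : Fin n) :
    ins k σ (Fin.castSucc i) = k.succAbove (σ i) := by
  simp [ins]

lemma ins_last (k : Fin (n+1)) (σ : Equiv.Perm (Fin n)) : ins k σ (Fin.last n) = k := by
  simp [ins]

def del (k : Fin (n+1)) (π : Equiv.Perm (Fin (n+1))) : Equiv.Perm (Fin n) :=
  Equiv.removeNone (finSuccEquivLast.symm.trans (π.trans (finSuccEquiv' k)))

lemma del_ins (k : Fin (n+1)) (σ : Equiv.Perm (Fin n)) : del k (ins k σ) = σ := by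
  have h : finSuccEquivLast.symm.trans ((ins k σ).trans (finSuccEquiv' k)) = σ.optionCongr := by
    ext x
    cases x with
    | none => simp [ins_last, finSuccEquiv'_at]
    | some i => simp [ins_castSucc, finSuccEquiv'_succAbove]
  rw [del, h, Equiv.removeNone_optionCongr]

lemma ins_del (k : Fin (n+1)) (π : Equiv.Perm (Fin (n+1))) (hk : π (Fin.last n) = k) :
    ins k (del k π) = π := by
  ext x
  induction x using Fin.lastCases with
  | last => rw [ins_last, hk]
  | cast i =>
    rw [ins_castSucc]
    obtain ⟨j, hj⟩ : ∃ j, k.succAbove j = π (Fin.castSucc i) := by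
      apply Fin.exists_succAbove_eq
      intro hcon
      have := π.injective (hcon.trans hk.symm)
      exact (Fin.castSucc_lt_last i).ne this
    have hsome : (finSuccEquivLast.symm.trans (π.trans (finSuccEquiv' k))) (some i) = some j := by
      simp [← hj, finSuccEquiv'_succAbove]
    have h2 := Equiv.removeNone_some _ ⟨j, hsome⟩
    rw [hsome] at h2
    rw [del]
    have : Equiv.removeNone (finSuccEquivLast.symm.trans (π.trans (finSuccEquiv' k))) i = j :=
      Option.some_injective _ h2
    rw [this, hj]

lemma succAbove_val (k : Fin (n+1)) (t : Fin n) :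
    (k.succAbove t).1 = if t.1 < k.1 then t.1 else t.1 + 1 := by
  rcases lt_or_ge (Fin.castSucc t) k with h | h
  · rw [Fin.succAbove_of_castSucc_lt _ _ h]
    rw [Fin.lt_def] at h
    simp only [Fin.coe_castSucc] at h ⊢
    split_ifs <;> omega
  · rw [Fin.succAbove_of_le_castSucc _ _ h]
    rw [Fin.le_def] at h
    simp only [Fin.coe_castSucc, Fin.val_succ] at h ⊢
    split_ifs <;> omega


lemma avoids_ins_iff {m : ℕ} (k : Fin (m+2)) (σ : Equiv.Perm (Fin (m+1))) :
    Avoids2d13 (ins k σ) ↔ Avoids2d13 σ ∧ k.1 ≤ (σ (Fin.last m)).1 + 1 := by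
  constructor
  · intro h
    constructor
    · rintro ⟨i, j, hj, hij, h1, h2⟩
      apply h
      refine ⟨Fin.castSucc i, Fin.castSucc j, by simp only [Fin.coe_castSucc]; omega, by simpa using hij, ?_, ?_⟩
      · rw [ins_castSucc, ins_castSucc, Fin.lt_def, succAbove_val, succAbove_val]
        rw [Fin.lt_def] at h1
        split_ifs <;> omega
      · have hidx : (⟨(Fin.castSucc j).1 + 1, by simp only [Fin.coe_castSucc]; omega⟩ : Fin (m+2)) =
            Fin.castSucc ⟨j.1 + 1, hj⟩ := by
          simp [Fin.ext_iff]
        rw [hidx, ins_castSucc, ins_castSucc, Fin.lt_def, succAbove_val, succAbove_val]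
        rw [Fin.lt_def] at h2
        split_ifs <;> omega
    · by_contra hcon
      push_neg at hcon
      have hv : (σ (Fin.last m)).1 + 1 < m + 1 := by
        have := k.2
        omega
      have hσx : σ (σ.symm ⟨(σ (Fin.last m)).1 + 1, hv⟩) = ⟨(σ (Fin.last m)).1 + 1, hv⟩ :=
        σ.apply_symm_apply _
      have hxne : σ.symm ⟨(σ (Fin.last m)).1 + 1, hv⟩ ≠ Fin.last m := by
        intro hcon2
        rw [hcon2] at hσx
        have h' := congrArg Fin.val hσx
        simp at h'
      have hxlt : σ.symm ⟨(σ (Fin.last m)).1 + 1, hv⟩ < Fin.last m :=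
        lt_of_le_of_ne (Fin.le_last _) hxne
      apply h
      refine ⟨Fin.castSucc (σ.symm ⟨(σ (Fin.last m)).1 + 1, hv⟩), Fin.castSucc (Fin.last m),
        by simp, by simpa using hxlt, ?_, ?_⟩
      · rw [ins_castSucc, ins_castSucc, hσx, Fin.lt_def, succAbove_val, succAbove_val]
        simp only [Fin.val_mk]
        split_ifs <;> omega
      · have hidx : (⟨(Fin.castSucc (Fin.last m)).1 + 1, by simp⟩ : Fin (m+2)) =
            Fin.last (m+1) := by simp [Fin.ext_iff]
        rw [hidx, ins_castSucc, ins_last, hσx, Fin.lt_def, succAbove_val]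
        simp only [Fin.val_mk]
        split_ifs <;> omega
  · rintro ⟨hA, hcond⟩ ⟨i, j, hj, hij, h1, h2⟩
    have hjm : j.1 < m + 1 := by omega
    have him : i.1 < m + 1 := by
      rw [Fin.lt_def] at hij; omega
    set i' : Fin (m+1) := ⟨i.1, him⟩ with hi'
    have hi : i = Fin.castSucc i' := by simp [Fin.ext_iff, hi']
    set j' : Fin (m+1) := ⟨j.1, hjm⟩ with hj'
    have hjc : j = Fin.castSucc j' := by simp [Fin.ext_iff, hj']
    rcases Nat.lt_or_ge (j.1 + 1) (m+1) with hcase | hcase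
    · -- occurrence entirely within first m+1 positions
      apply hA
      refine ⟨i', j', by simpa using hcase, by rw [Fin.lt_def] at hij ⊢; simpa [hi', hj'] using hij, ?_, ?_⟩
      · rw [hi, hjc, ins_castSucc, ins_castSucc, Fin.lt_def,
          succAbove_val, succAbove_val] at h1
        rw [Fin.lt_def]
        split_ifs at h1 <;> omega
      · have hidx : (⟨j.1 + 1, hj⟩ : Fin (m+2)) =
            Fin.castSucc ⟨j'.1 + 1, by simpa using hcase⟩ := by simp [Fin.ext_iff, hj']
        rw [hi, hidx, ins_castSucc, ins_castSucc, Fin.lt_def,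
          succAbove_val, succAbove_val] at h2
        rw [Fin.lt_def]
        split_ifs at h2 <;> omega
    · -- the ascent ends at the last position
      have hjeq : j.1 = m := by omega
      have hjlast : j' = Fin.last m := by simp [Fin.ext_iff, hj', hjeq]
      have hidx : (⟨j.1 + 1, hj⟩ : Fin (m+2)) = Fin.last (m+1) := by
        simp [Fin.ext_iff]; omega
      rw [hidx, ins_last, hi, ins_castSucc] at h2
      rw [hi, hjc, hjlast, ins_castSucc, ins_castSucc] at h1
      rw [Fin.lt_def, succAbove_val, succAbove_val] at h1
      rw [Fin.lt_def, succAbove_val] at h2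
      split_ifs at h1 h2 <;> omega


noncomputable def f (n m : ℕ) : ℕ :=
  Nat.card {σ : Equiv.Perm (Fin (n+1)) // Avoids2d13 σ ∧ (σ (Fin.last n)).1 = m}

lemma f_zero : f 0 0 = 1 := by
  rw [f]
  have h : ∀ σ : Equiv.Perm (Fin 1), Avoids2d13 σ ∧ (σ (Fin.last 0)).1 = 0 := by
    intro σ
    refine ⟨?_, by omega⟩
    rintro ⟨i, j, hj, hij, -⟩
    omega
  rw [Nat.card_congr (Equiv.subtypeUnivEquiv h)]
  simp [Nat.card_eq_fintype_card]

lemma f_rec (n k : ℕ) (hk : k ≤ n + 1) :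
    f (n+1) k = ∑ m ∈ Finset.range (n+1), if k ≤ m + 1 then f n m else 0 := by
  classical
  set kF : Fin (n+2) := ⟨k, by omega⟩ with hkF
  have e1 : {π : Equiv.Perm (Fin (n+2)) // Avoids2d13 π ∧ (π (Fin.last (n+1))).1 = k} ≃
      {σ : Equiv.Perm (Fin (n+1)) // Avoids2d13 σ ∧ k ≤ (σ (Fin.last n)).1 + 1} := by
    refine ⟨fun π => ⟨del kF π.1, ?_⟩, fun σ => ⟨ins kF σ.1, ?_⟩, ?_, ?_⟩
    · have hlast : π.1 (Fin.last (n+1)) = kF := Fin.ext π.2.2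
      have h := (avoids_ins_iff kF (del kF π.1)).mp (by rw [ins_del _ _ hlast]; exact π.2.1)
      exact ⟨h.1, h.2⟩
    · refine ⟨((avoids_ins_iff kF σ.1).mpr ⟨σ.2.1, σ.2.2⟩), by rw [ins_last]⟩
    · intro π
      exact Subtype.ext (ins_del _ _ (Fin.ext π.2.2))
    · intro σ
      exact Subtype.ext (del_ins _ _)
  rw [f, Nat.card_congr e1]
  rw [Nat.card_eq_fintype_card, Fintype.card_subtype]
  rw [Finset.card_eq_sum_card_fiberwise
    (f := fun σ : Equiv.Perm (Fin (n+1)) => (σ (Fin.last n)).1) (t := Finset.range (n+1))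
    (fun σ _ => Finset.mem_range.mpr (σ (Fin.last n)).2)]
  refine Finset.sum_congr rfl fun m hm => ?_
  rw [Finset.mem_range] at hm
  by_cases hkm : k ≤ m + 1
  · rw [if_pos hkm, f, Nat.card_eq_fintype_card, Fintype.card_subtype]
    apply Finset.card_bij (fun σ _ => σ)
    · intro σ hσ
      simp only [Finset.mem_filter, Finset.mem_univ, true_and] at hσ ⊢
      exact ⟨hσ.1.1, hσ.2⟩
    · intro a ha b hb hab
      exact hab
    · intro σ hσ
      simp only [Finset.mem_filter, Finset.mem_univ, true_and] at hσ
      refine ⟨σ, ?_, rfl⟩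
      simp only [Finset.mem_filter, Finset.mem_univ, true_and]
      exact ⟨⟨hσ.1, by omega⟩, hσ.2⟩
  · rw [if_neg hkm]
    rw [Finset.card_eq_zero, Finset.filter_filter]
    rw [Finset.filter_eq_empty_iff]
    intro σ _
    rintro ⟨⟨-, h1⟩, h2⟩
    omega


lemma choose_step_le (a s : ℕ) (h : a ≤ 2*s + 1) : a.choose (s+1) ≤ a.choose s := by
  have h1 := Nat.choose_succ_right_eq a s
  have h2 : a - s ≤ s + 1 := by omega
  have h3 : a.choose (s+1) * (s+1) ≤ a.choose s * (s+1) := by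
    calc a.choose (s+1) * (s+1) = a.choose s * (a - s) := h1
    _ ≤ a.choose s * (s+1) := Nat.mul_le_mul_left _ h2
  exact Nat.le_of_mul_le_mul_right h3 (by omega)

lemma sum_D (n : ℕ) : ∀ d k : ℕ, k ≤ n + 1 → n + 1 - k = d →
    (∑ m ∈ Finset.range (n+1),
      if k ≤ m + 1 then ((2*n-m).choose n - (2*n-m).choose (n+1)) else 0)
    = (2*(n+1)-k).choose (n+1) - (2*(n+1)-k).choose (n+2) := by
  intro d
  induction d with
  | zero =>
    intro k hk hd
    have hkn : k = n + 1 := by omega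
    subst hkn
    have hsum : (∑ m ∈ Finset.range (n+1),
        if n + 1 ≤ m + 1 then ((2*n-m).choose n - (2*n-m).choose (n+1)) else 0)
        = (∑ m ∈ Finset.range (n+1),
        if m = n then ((2*n-m).choose n - (2*n-m).choose (n+1)) else 0) := by
      refine Finset.sum_congr rfl fun m hm => ?_
      rw [Finset.mem_range] at hm
      by_cases h : m = n
      · rw [if_pos (by omega), if_pos h]
      · rw [if_neg (by omega), if_neg h]
    rw [hsum, Finset.sum_ite_eq' (Finset.range (n+1)) n, if_pos (Finset.mem_range.mpr (by omega))]
    have h1 : 2*n - n = n := by omega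
    have h2 : 2*(n+1) - (n+1) = n + 1 := by omega
    rw [h1, h2, Nat.choose_self, Nat.choose_self,
      Nat.choose_eq_zero_of_lt (by omega), Nat.choose_eq_zero_of_lt (by omega)]
  | succ d ih =>
    intro k hk hd
    have hkn : k ≤ n := by omega
    have hih := ih (k+1) (by omega) (by omega)
    rcases Nat.eq_zero_or_pos k with hk0 | hkpos
    · subst hk0
      have hsum : (∑ m ∈ Finset.range (n+1),
          if 0 ≤ m + 1 then ((2*n-m).choose n - (2*n-m).choose (n+1)) else 0)
          = (∑ m ∈ Finset.range (n+1),
          if 0+1 ≤ m + 1 then ((2*n-m).choose n - (2*n-m).choose (n+1)) else 0) := by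
        refine Finset.sum_congr rfl fun m hm => ?_
        rw [if_pos (by omega), if_pos (by omega)]
      rw [hsum, hih]
      -- identity: C(2n+1,n+1) - C(2n+1,n+2) = C(2n+2,n+1) - C(2n+2,n+2)
      have e1 : 2*(n+1) - (0+1) = (2*n+1) := by omega
      have e2 : 2*(n+1) - 0 = (2*n+1) + 1 := by omega
      rw [e1, e2]
      have p1 : (2*n+1+1).choose (n+1) = (2*n+1).choose n + (2*n+1).choose (n+1) :=
        Nat.choose_succ_succ _ _
      have p2 : (2*n+1+1).choose (n+2) = (2*n+1).choose (n+1) + (2*n+1).choose (n+2) :=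
        Nat.choose_succ_succ _ _
      have psym : (2*n+1).choose (n+1) = (2*n+1).choose n := Nat.choose_symm_half n
      have m1 : (2*n+1).choose (n+1) ≤ (2*n+1).choose n := choose_step_le _ _ (by omega)
      have m2 : (2*n+1).choose (n+2) ≤ (2*n+1).choose (n+1) := choose_step_le _ _ (by omega)
      rw [p1, p2]
      omega
    · -- k ≥ 1 : split the sum
      have hsplit : (∑ m ∈ Finset.range (n+1),
          if k ≤ m + 1 then ((2*n-m).choose n - (2*n-m).choose (n+1)) else 0)
          = (∑ m ∈ Finset.range (n+1),
            if k + 1 ≤ m + 1 then ((2*n-m).choose n - (2*n-m).choose (n+1)) else 0)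
          + (∑ m ∈ Finset.range (n+1),
            if m = k - 1 then ((2*n-m).choose n - (2*n-m).choose (n+1)) else 0) := by
        rw [← Finset.sum_add_distrib]
        refine Finset.sum_congr rfl fun m hm => ?_
        by_cases h1 : m = k - 1
        · rw [if_pos (by omega), if_neg (by omega), if_pos h1]
          omega
        · by_cases h2 : k ≤ m + 1
          · rw [if_pos h2, if_pos (by omega), if_neg h1]
            omega
          · rw [if_neg h2, if_neg (by omega), if_neg h1]
      rw [hsplit, hih, Finset.sum_ite_eq' (Finset.range (n+1)) (k-1),
        if_pos (Finset.mem_range.mpr (by omega))]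
      have e1 : 2*n - (k-1) = 2*n - k + 1 := by omega
      have e2 : 2*(n+1) - (k+1) = 2*n - k + 1 := by omega
      have e3 : 2*(n+1) - k = 2*n - k + 2 := by omega
      rw [e1, e2, e3]
      have p1 : (2*n-k+2).choose (n+1) = (2*n-k+1).choose n + (2*n-k+1).choose (n+1) :=
        Nat.choose_succ_succ _ _
      have p2 : (2*n-k+2).choose (n+2) = (2*n-k+1).choose (n+1) + (2*n-k+1).choose (n+2) :=
        Nat.choose_succ_succ _ _
      have m1 : (2*n-k+1).choose (n+1) ≤ (2*n-k+1).choose n := choose_step_le _ _ (by omega)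
      have m2 : (2*n-k+1).choose (n+2) ≤ (2*n-k+1).choose (n+1) := choose_step_le _ _ (by omega)
      rw [p1, p2]
      omega

lemma f_eq (n : ℕ) : ∀ k : ℕ, k ≤ n → f n k = (2*n-k).choose n - (2*n-k).choose (n+1) := by
  induction n with
  | zero =>
    intro k hk
    have hk0 : k = 0 := by omega
    subst hk0
    rw [f_zero]
    simp
  | succ n ih =>
    intro k hk
    rw [f_rec n k hk]
    have hsum : (∑ m ∈ Finset.range (n+1), if k ≤ m + 1 then f n m else 0)
        = (∑ m ∈ Finset.range (n+1),
          if k ≤ m + 1 then ((2*n-m).choose n - (2*n-m).choose (n+1)) else 0) := by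
      refine Finset.sum_congr rfl fun m hm => ?_
      rw [Finset.mem_range] at hm
      by_cases h : k ≤ m + 1
      · rw [if_pos h, if_pos h, ih m (by omega)]
      · rw [if_neg h, if_neg h]
    rw [hsum, sum_D n (n+1-k) k hk rfl]

end BallotAux

theorem ballot_distribution (n k : ℕ) (hn : 1 ≤ n) (hk1 : 1 ≤ k) (hkn : k ≤ n) :
    n * Nat.card {π : Equiv.Perm (Fin n) // Avoids2d13 π ∧ π ⟨n - 1, by omega⟩ = ⟨k - 1, by omega⟩} = k * (2 * n - k - 1).choose (n - 1) := by
  obtain ⟨n', rfl⟩ : ∃ n', n = n' + 1 := ⟨n - 1, by omega⟩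
  have hcard : Nat.card {π : Equiv.Perm (Fin (n'+1)) //
        Avoids2d13 π ∧ π ⟨n' + 1 - 1, by omega⟩ = ⟨k - 1, by omega⟩}
      = BallotAux.f n' (k-1) := by
    rw [BallotAux.f]
    apply Nat.card_congr
    apply Equiv.subtypeEquivRight
    intro π
    have hidx : (⟨n' + 1 - 1, by omega⟩ : Fin (n'+1)) = Fin.last n' := by
      simp [Fin.ext_iff]
    rw [hidx]
    constructor
    · rintro ⟨h1, h2⟩
      exact ⟨h1, by rw [h2]⟩
    · rintro ⟨h1, h2⟩
      exact ⟨h1, Fin.ext (by rw [h2])⟩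
  rw [hcard, BallotAux.f_eq n' (k-1) (by omega)]
  have harg : 2 * (n'+1) - k - 1 = 2*n' - (k-1) := by omega
  have hidx2 : n' + 1 - 1 = n' := by omega
  rw [harg, hidx2]
  have hmul : (n'+1) * ((2*n'-(k-1)).choose (n'+1)) = (n'+1-k) * ((2*n'-(k-1)).choose n') := by
    have h1 := Nat.choose_succ_right_eq (2*n' - (k-1)) n'
    have h2 : 2*n' - (k-1) - n' = n' + 1 - k := by omega
    rw [h2] at h1
    calc (n'+1) * ((2*n'-(k-1)).choose (n'+1))
        = ((2*n'-(k-1)).choose (n'+1)) * (n'+1) := Nat.mul_comm _ _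
      _ = ((2*n'-(k-1)).choose n') * (n'+1-k) := h1
      _ = (n'+1-k) * ((2*n'-(k-1)).choose n') := Nat.mul_comm _ _
  have hdist : (n'+1) * ((2*n'-(k-1)).choose n')
      = (n'+1-k) * ((2*n'-(k-1)).choose n') + k * ((2*n'-(k-1)).choose n') := by
    rw [← Nat.add_mul]
    congr 1
    omega
  rw [Nat.mul_sub]
  omega
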